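/- Let G be an ample Hausdorff groupoid, Γ a discrete group, and c : G → Γ a locally constant cocycle (c(γ₁γ₂) = c(γ₁)c(γ₂) for composable pairs). Setting A_g = C_c(G_g, R) where G_g = c⁻¹(g), the submodules A_g form a Γ-grading of the Steinberg algebra A_R(G), and this grading is symmetric: A_g A_{g⁻¹} A_g = A_g for all g ∈ Γ. -/

import Mathlib

open TopologicalSpace

/-- A groupoid structure on a type `G`: every element is an arrow, with source and
range maps landing in the units, a (partial, defaulted) multiplication defined on
composable pairs, and inversion. -/
structure DGroupoid (G : Type*) where
  src : G → G
  rng : G → G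
  mul : G → G → G
  inv : G → G
  src_src : ∀ a, src (src a) = src a
  rng_src : ∀ a, rng (src a) = src a
  src_rng : ∀ a, src (rng a) = rng a
  rng_rng : ∀ a, rng (rng a) = rng a
  src_mul : ∀ a b, src a = rng b → src (mul a b) = src b
  rng_mul : ∀ a b, src a = rng b → rng (mul a b) = rng a
  mul_assoc : ∀ a b c, src a = rng b → src b = rng c →
    mul (mul a b) c = mul a (mul b c)
  mul_src : ∀ a, mul a (src a) = a
  rng_mul_self : ∀ a, mul (rng a) a = a
  src_inv : ∀ a, src (inv a) = rng a
  rng_inv : ∀ a, rng (inv a) = src a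
  mul_inv : ∀ a, mul a (inv a) = rng a
  inv_mul : ∀ a, mul (inv a) a = src a

namespace DGroupoid

variable {G : Type*} [TopologicalSpace G] (gr : DGroupoid G)

/-- The unit space `G⁽⁰⁾`. -/
def unitSpace : Set G := {x | gr.src x = x}

/-- The set of composable pairs `G⁽²⁾`. -/
def composable : Set (G × G) := {p | gr.src p.1 = gr.rng p.2}

/-- The range map viewed as a map `G → G⁽⁰⁾`. -/
def rngTo (γ : G) : gr.unitSpace := ⟨gr.rng γ, gr.src_rng γ⟩

/-- A topological groupoid: all structure maps are continuous. -/
structure IsTopological : Prop where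
  continuous_src : Continuous gr.src
  continuous_rng : Continuous gr.rng
  continuous_inv : Continuous gr.inv
  continuous_mul : ContinuousOn (fun p : G × G => gr.mul p.1 p.2) gr.composable

/-- An étale groupoid: a topological groupoid whose unit space is locally compact
Hausdorff in the relative topology and whose range map is a local homeomorphism
onto the unit space. -/
structure IsEtale : Prop where
  toIsTopological : gr.IsTopological
  locallyCompactUnits : LocallyCompactSpace gr.unitSpace
  t2Units : T2Space gr.unitSpace
  localHomeoRng : IsLocalHomeomorph gr.rngTo

/-- An ample groupoid: an étale groupoid whose unit space is zero-dimensional,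
i.e. has a basis of clopen sets. -/
structure IsAmple : Prop where
  toIsEtale : gr.IsEtale
  zeroDimUnits : IsTopologicalBasis {s : Set gr.unitSpace | IsClopen s}

/-- A bisection: a subset on which both the range and the source maps are injective. -/
def IsBisection (U : Set G) : Prop := Set.InjOn gr.rng U ∧ Set.InjOn gr.src U

/-- The isotropy group bundle `Iso(G)`. -/
def iso : Set G := {γ | gr.rng γ = gr.src γ}

variable (R : Type*) [CommRing R]

/-- Membership in the Steinberg algebra `A_R(G)`: locally constant, compactly
supported `R`-valued functions on `G`. -/
def InSteinberg (f : G → R) : Prop := IsLocallyConstant f ∧ HasCompactSupport f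

/-- The convolution product on `A_R(G)`:
`(f * g)(γ) = ∑_{γ₁γ₂ = γ} f(γ₁)g(γ₂)`. -/
noncomputable def conv (f g : G → R) : G → R := fun γ =>
  ∑ᶠ p ∈ {p : G × G | gr.src p.1 = gr.rng p.2 ∧ gr.mul p.1 p.2 = γ}, f p.1 * g p.2

end DGroupoid

set_option linter.unusedSectionVars false
namespace DGroupoid

open Function Set

section Aux

variable {G : Type*} [TopologicalSpace G] {R : Type*} [CommRing R]
variable (gr : DGroupoid G)

lemma inv_inv' (a : G) : gr.inv (gr.inv a) = a := by
  have h1 : gr.src (gr.inv (gr.inv a)) = gr.rng (gr.inv a) := gr.src_inv _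
  have h2 : gr.src (gr.inv a) = gr.rng a := gr.src_inv a
  calc gr.inv (gr.inv a)
      = gr.mul (gr.inv (gr.inv a)) (gr.src (gr.inv (gr.inv a))) := (gr.mul_src _).symm
    _ = gr.mul (gr.inv (gr.inv a)) (gr.mul (gr.inv a) a) := by
        rw [h1, gr.rng_inv, ← gr.inv_mul a]
    _ = gr.mul (gr.mul (gr.inv (gr.inv a)) (gr.inv a)) a :=
        (gr.mul_assoc _ _ _ h1 h2).symm
    _ = gr.mul (gr.src (gr.inv a)) a := by rw [gr.inv_mul]
    _ = gr.mul (gr.rng a) a := by rw [h2]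
    _ = a := gr.rng_mul_self a

lemma inv_injective : Function.Injective gr.inv := by
  intro a b h
  rw [← gr.inv_inv' a, h, gr.inv_inv']

lemma inv_mul_cancel_left' (α γ : G) (h : gr.rng α = gr.rng γ) :
    gr.mul α (gr.mul (gr.inv α) γ) = γ := by
  have hc : gr.src (gr.inv α) = gr.rng γ := by rw [gr.src_inv, h]
  calc gr.mul α (gr.mul (gr.inv α) γ)
      = gr.mul (gr.mul α (gr.inv α)) γ := (gr.mul_assoc _ _ _ (gr.rng_inv α).symm hc).symm
    _ = gr.mul (gr.rng α) γ := by rw [gr.mul_inv]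
    _ = gr.mul (gr.rng γ) γ := by rw [h]
    _ = γ := gr.rng_mul_self γ

lemma mul_inv_cancel_left' (α β : G) (h : gr.src α = gr.rng β) :
    gr.mul (gr.inv α) (gr.mul α β) = β := by
  calc gr.mul (gr.inv α) (gr.mul α β)
      = gr.mul (gr.mul (gr.inv α) α) β := (gr.mul_assoc _ _ _ (gr.src_inv α) h).symm
    _ = gr.mul (gr.src α) β := by rw [gr.inv_mul]
    _ = gr.mul (gr.rng β) β := by rw [h]
    _ = β := gr.rng_mul_self β

variable {Γ : Type*} [Group Γ]

lemma c_src {c : G → Γ} (hcoc : ∀ a b, gr.src a = gr.rng b → c (gr.mul a b) = c a * c b)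
    (a : G) : c (gr.src a) = 1 := by
  have h := hcoc a (gr.src a) (gr.rng_src a).symm
  rw [gr.mul_src] at h
  exact (left_eq_mul.mp h)

lemma c_inv {c : G → Γ} (hcoc : ∀ a b, gr.src a = gr.rng b → c (gr.mul a b) = c a * c b)
    (a : G) : c (gr.inv a) = (c a)⁻¹ := by
  have h := hcoc (gr.inv a) a (gr.src_inv a)
  rw [gr.inv_mul, gr.c_src hcoc] at h
  exact eq_inv_of_mul_eq_one_left h.symm

lemma continuous_rngTo (ht : gr.IsTopological) : Continuous gr.rngTo :=
  ht.continuous_rng.subtype_mk _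

lemma isClosed_composable [T2Space G] (ht : gr.IsTopological) : IsClosed gr.composable :=
  isClosed_eq (ht.continuous_src.comp continuous_fst) (ht.continuous_rng.comp continuous_snd)

end Aux

end DGroupoid
namespace DGroupoid

section Aux2

variable {G : Type*} [TopologicalSpace G] [T2Space G] {R : Type*} [CommRing R]
variable (gr : DGroupoid G)

/-- A compact open bisection sitting inside a chart of the range map. -/
structure IsPiece (D : Set G) : Prop where
  compact : IsCompact D
  isOpen : IsOpen D
  srcInj : Set.InjOn gr.src D
  chart : ∃ e : OpenPartialHomeomorph G gr.unitSpace, ⇑e = gr.rngTo ∧ D ⊆ e.source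

variable {gr}

lemma IsPiece.rngInj {D : Set G} (hD : gr.IsPiece D) : Set.InjOn gr.rng D := by
  obtain ⟨e, he, hDe⟩ := hD.chart
  intro a ha b hb hab
  have : gr.rngTo a = gr.rngTo b := Subtype.ext hab
  exact e.injOn (hDe ha) (hDe hb) (by rw [he]; exact this)

lemma IsPiece.subset {D E : Set G} (hD : gr.IsPiece D) (hE : E ⊆ D) (hEc : IsCompact E)
    (hEo : IsOpen E) : gr.IsPiece E := by
  obtain ⟨e, he, hDe⟩ := hD.chart
  exact ⟨hEc, hEo, hD.srcInj.mono hE, e, he, hE.trans hDe⟩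

lemma exists_piece (ha : gr.IsAmple) {O : Set G} (hO : IsOpen O) {γ : G} (hγ : γ ∈ O) :
    ∃ D : Set G, gr.IsPiece D ∧ γ ∈ D ∧ D ⊆ O := by
  have ht := ha.toIsEtale.toIsTopological
  obtain ⟨e, heγ, hee⟩ := ha.toIsEtale.localHomeoRng γ
  obtain ⟨e', he'γ, hee'⟩ := ha.toIsEtale.localHomeoRng (gr.inv γ)
  set W : Set G := O ∩ e.source ∩ gr.inv ⁻¹' e'.source with hWdef
  have hWopen : IsOpen W := ((hO.inter e.open_source).inter
    (e'.open_source.preimage ht.continuous_inv))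
  have hγW : γ ∈ W := ⟨⟨hγ, heγ⟩, he'γ⟩
  have hWsrc : W ⊆ e.source := fun δ hδ => hδ.1.2
  -- image of W under the chart is open
  have hSopen : IsOpen (e '' W) := e.isOpen_image_of_subset_source hWopen hWsrc
  have huS : e γ ∈ e '' W := ⟨γ, hγW, rfl⟩
  haveI := ha.toIsEtale.locallyCompactUnits
  haveI := ha.toIsEtale.t2Units
  obtain ⟨K, hKmem, hKS, hKcomp⟩ := local_compact_nhds (hSopen.mem_nhds huS)
  obtain ⟨C, hCclopen, huC, hCK⟩ := ha.zeroDimUnits.exists_subset_of_mem_open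
    (mem_interior_iff_mem_nhds.mpr hKmem) isOpen_interior
  have hCcomp : IsCompact C :=
    hKcomp.of_isClosed_subset hCclopen.isClosed (hCK.trans interior_subset)
  have hCS : C ⊆ e '' W := hCK.trans (interior_subset.trans hKS)
  have hCtarget : C ⊆ e.target := hCS.trans (Set.image_subset_iff.mpr
    (fun δ hδ => e.map_source (hWsrc hδ)))
  set D : Set G := W ∩ ⇑e ⁻¹' C with hDdef
  have hDW : D ⊆ W := Set.inter_subset_left
  -- D = e.symm '' C
  have hDeq : D = e.symm '' C := by
    apply Set.Subset.antisymm
    · rintro δ ⟨hδW, hδC⟩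
      exact ⟨e δ, hδC, e.left_inv (hWsrc hδW)⟩
    · rintro _ ⟨u, huC', rfl⟩
      obtain ⟨w, hwW, hwu⟩ := hCS huC'
      have : e.symm u = w := by rw [← hwu, e.left_inv (hWsrc hwW)]
      rw [this]
      refine ⟨hwW, ?_⟩
      show e w ∈ C
      rw [hwu]; exact huC'
  have hDcomp : IsCompact D := by
    rw [hDeq]
    exact hCcomp.image_of_continuousOn (e.continuousOn_symm.mono hCtarget)
  have hecont : Continuous ⇑e := hee ▸ gr.continuous_rngTo ht
  have hDopen : IsOpen D := hWopen.inter (hCclopen.isOpen.preimage hecont)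
  have hsrcInj : Set.InjOn gr.src D := by
    intro a haD b hbD hab
    have ha' : gr.inv a ∈ e'.source := (hDW haD).2
    have hb' : gr.inv b ∈ e'.source := (hDW hbD).2
    have : gr.rngTo (gr.inv a) = gr.rngTo (gr.inv b) := by
      apply Subtype.ext
      show gr.rng (gr.inv a) = gr.rng (gr.inv b)
      rw [gr.rng_inv, gr.rng_inv, hab]
    have h2 : gr.inv a = gr.inv b := e'.injOn ha' hb' (by
      rw [← hee']; exact this)
    exact gr.inv_injective h2
  exact ⟨D, ⟨hDcomp, hDopen, hsrcInj, e, hee.symm, hDW.trans hWsrc⟩,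
    ⟨hγW, huC⟩, fun δ hδ => (hDW hδ).1.1⟩

end Aux2

end DGroupoid
namespace DGroupoid

open Function Set

section Aux3

variable {G : Type*} [TopologicalSpace G] [T2Space G] {R : Type*} [CommRing R]
variable {gr : DGroupoid G}

lemma support_isClopen {f : G → R} (hf : IsLocallyConstant f) :
    IsClopen (Function.support f) := by
  constructor
  · have : Function.support f = (f ⁻¹' {0})ᶜ := by
      ext γ; simp [Function.mem_support]
    rw [this]
    exact (hf {0}).isClosed_compl
  · have : Function.support f = f ⁻¹' {0}ᶜ := by
      ext γ; simp [Function.mem_support]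
    rw [this]
    exact hf _

lemma support_compact {f : G → R} (hf : InSteinberg R f) : IsCompact (Function.support f) := by
  have h1 : tsupport f = Function.support f :=
    closure_eq_iff_isClosed.mpr (support_isClopen hf.1).1
  have := hf.2
  rwa [HasCompactSupport, h1] at this

lemma decompose (ha : gr.IsAmple) {f : G → R} (hf : InSteinberg R f) :
    ∃ (n : ℕ) (D : Fin n → Set G) (r : Fin n → R),
      (∀ i, gr.IsPiece (D i)) ∧ (∀ i, D i ⊆ Function.support f) ∧
      (∀ i, ∀ γ ∈ D i, f γ = r i) ∧
      (∀ γ, f γ = ∑ i, (D i).indicator (fun _ => r i) γ) := by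
  classical
  have hso : IsOpen (Function.support f) := (support_isClopen hf.1).2
  have hsc : IsCompact (Function.support f) := support_compact hf
  -- for each point of the support, a piece around it
  have key : ∀ γ : G, γ ∈ Function.support f →
      ∃ D : Set G, gr.IsPiece D ∧ γ ∈ D ∧ D ⊆ Function.support f ∩ f ⁻¹' {f γ} := by
    intro γ hγ
    exact exists_piece ha (hso.inter (hf.1 {f γ})) ⟨hγ, rfl⟩
  choose Dfun hpiece hmem hsub using key
  -- finite subcover
  have hcover : Function.support f ⊆
      ⋃ x : Function.support f, Dfun x.1 x.2 := by
    intro γ hγ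
    exact Set.mem_iUnion.mpr ⟨⟨γ, hγ⟩, hmem γ hγ⟩
  obtain ⟨t, ht⟩ := hsc.elim_finite_subcover _ (fun x : Function.support f => (hpiece x.1 x.2).isOpen) hcover
  set n := t.card with hn
  set idx : Fin n → Function.support f := fun i => (t.equivFin.symm i).1 with hidx
  set D0 : Fin n → Set G := fun i => Dfun (idx i).1 (idx i).2 with hD0
  -- disjointify
  set D : Fin n → Set G := fun i => D0 i \ ⋃ j ∈ Finset.univ.filter (· < i), D0 j with hD
  have hDsubD0 : ∀ i, D i ⊆ D0 i := fun i => Set.diff_subset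
  have hunion_open : ∀ i : Fin n, IsOpen (⋃ j ∈ Finset.univ.filter (· < i), D0 j) := by
    intro i
    exact isOpen_biUnion fun j _ => (hpiece _ _).isOpen
  have hunion_closed : ∀ i : Fin n, IsClosed (⋃ j ∈ Finset.univ.filter (· < i), D0 j) := by
    intro i
    exact (Finset.univ.filter (· < i)).finite_toSet.isClosed_biUnion
      fun j _ => (hpiece _ _).compact.isClosed
  have hDopen : ∀ i, IsOpen (D i) := fun i =>
    (hpiece _ _).isOpen.sdiff (hunion_closed i)
  have hDclosed : ∀ i, IsClosed (D i) := fun i =>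
    IsClosed.sdiff (hpiece _ _).compact.isClosed (hunion_open i)
  have hDcomp : ∀ i, IsCompact (D i) := fun i =>
    (hpiece _ _).compact.of_isClosed_subset (hDclosed i) Set.diff_subset
  have hDsupp : ∀ i, D i ⊆ Function.support f := fun i =>
    (hDsubD0 i).trans ((hsub _ _).trans Set.inter_subset_left)
  refine ⟨n, D, fun i => f (idx i).1, fun i => (hpiece _ _).subset (hDsubD0 i) (hDcomp i) (hDopen i),
    hDsupp, ?_, ?_⟩
  · intro i γ hγ
    have := (hsub _ _ (hDsubD0 i hγ)).2
    simpa using this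
  · -- each point of the support lies in exactly one `D i`
    have hcov' : ∀ γ, γ ∈ Function.support f → ∃ i, γ ∈ D i ∧ ∀ j, γ ∈ D j → j = i := by
      intro γ hγ
      have h0 : ∃ i, γ ∈ D0 i := by
        have := ht hγ
        rw [Set.mem_iUnion₂] at this
        obtain ⟨x, hx, hγx⟩ := this
        refine ⟨t.equivFin ⟨x, hx⟩, ?_⟩
        show γ ∈ Dfun (idx _).1 (idx _).2
        have : idx (t.equivFin ⟨x, hx⟩) = x := by
          simp [hidx]
        rw [this]
        exact hγx
      set s : Finset (Fin n) := Finset.univ.filter (fun i => γ ∈ D0 i) with hs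
      have hne : s.Nonempty := by
        obtain ⟨i, hi⟩ := h0
        exact ⟨i, by simp [hs, hi]⟩
      set i₀ := s.min' hne with hi₀
      have hi₀s : i₀ ∈ s := s.min'_mem hne
      have hi₀D0 : γ ∈ D0 i₀ := by
        have := hi₀s; simp [hs] at this; exact this
      refine ⟨i₀, ⟨hi₀D0, ?_⟩, ?_⟩
      · intro hmem'
        rw [Set.mem_iUnion₂] at hmem'
        obtain ⟨j, hj, hγj⟩ := hmem'
        simp only [Finset.mem_filter, Finset.mem_univ, true_and] at hj
        have : i₀ ≤ j := s.min'_le j (by simp [hs, hγj])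
        exact absurd hj (not_lt.mpr this)
      · intro j hj
        have hjD0 : γ ∈ D0 j := hDsubD0 j hj
        have h1 : i₀ ≤ j := s.min'_le j (by simp [hs, hjD0])
        rcases lt_or_eq_of_le h1 with h2 | h2
        · exfalso
          apply hj.2
          rw [Set.mem_iUnion₂]
          exact ⟨i₀, by simp [h2], hi₀D0⟩
        · exact h2.symm
    intro γ
    by_cases hγ : γ ∈ Function.support f
    · obtain ⟨i, hi, huniq⟩ := hcov' γ hγ
      rw [Finset.sum_eq_single i]
      · rw [Set.indicator_of_mem hi]
        have := (hsub _ _ (hDsubD0 i hi)).2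
        simpa using this
      · intro j _ hji
        apply Set.indicator_of_notMem
        intro hγj
        exact hji (huniq j hγj)
      · intro h; exact absurd (Finset.mem_univ i) h
    · have h1 : f γ = 0 := Function.notMem_support.mp hγ
      rw [h1]
      symm
      apply Finset.sum_eq_zero
      intro j _
      apply Set.indicator_of_notMem
      intro hγj
      exact hγ (hDsupp j hγj)

end Aux3

end DGroupoid
namespace DGroupoid

open Function Set

section Aux4

set_option linter.unusedSectionVars false

variable {G : Type*} [TopologicalSpace G] {R : Type*} [CommRing R]
variable {gr : DGroupoid G}

lemma conv_apply (x y : G → R) (γ : G) :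
    gr.conv R x y γ =
      ∑ᶠ p ∈ {p : G × G | gr.src p.1 = gr.rng p.2 ∧ gr.mul p.1 p.2 = γ}, x p.1 * y p.2 := rfl

lemma conv_eq_zero' {x y : G → R} {γ : G}
    (h : ∀ p : G × G, gr.src p.1 = gr.rng p.2 → gr.mul p.1 p.2 = γ → x p.1 * y p.2 = 0) :
    gr.conv R x y γ = 0 :=
  finsum_mem_of_eqOn_zero fun p hp => h p hp.1 hp.2

lemma conv_eq_single {x y : G → R} {γ : G} (p₀ : G × G)
    (h₁ : gr.src p₀.1 = gr.rng p₀.2) (h₂ : gr.mul p₀.1 p₀.2 = γ)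
    (h : ∀ p : G × G, gr.src p.1 = gr.rng p.2 → gr.mul p.1 p.2 = γ →
      x p.1 * y p.2 ≠ 0 → p = p₀) :
    gr.conv R x y γ = x p₀.1 * y p₀.2 := by
  rw [conv_apply, finsum_mem_def]
  rw [finsum_eq_single _ p₀]
  · exact Set.indicator_of_mem (Set.mem_setOf.mpr ⟨h₁, h₂⟩) _
  · intro p hp
    by_cases hpS : p ∈ {p : G × G | gr.src p.1 = gr.rng p.2 ∧ gr.mul p.1 p.2 = γ}
    · rw [Set.indicator_of_mem hpS]
      by_contra hne
      exact hp (h p hpS.1 hpS.2 hne)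
    · exact Set.indicator_of_notMem hpS _

lemma conv_sum_left {ι : Type*} (s : Finset ι) (x : ι → G → R) (y : G → R) (γ : G)
    (hfin : ∀ i ∈ s, ({p : G × G | gr.src p.1 = gr.rng p.2 ∧ gr.mul p.1 p.2 = γ} ∩
      Function.support (fun p : G × G => x i p.1 * y p.2)).Finite) :
    gr.conv R (fun δ => ∑ i ∈ s, x i δ) y γ = ∑ i ∈ s, gr.conv R (x i) y γ := by
  classical
  induction s using Finset.cons_induction with
  | empty =>
    simp only [Finset.sum_empty]
    exact conv_eq_zero' fun p _ _ => by simp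
  | cons a s has ih =>
    simp only [Finset.sum_cons]
    rw [← ih (fun i hi => hfin i (Finset.mem_cons_of_mem hi))]
    have hfa := hfin a (Finset.mem_cons_self a s)
    have hfs : ({p : G × G | gr.src p.1 = gr.rng p.2 ∧ gr.mul p.1 p.2 = γ} ∩
        Function.support (fun p : G × G => (∑ i ∈ s, x i p.1) * y p.2)).Finite := by
      apply Set.Finite.subset (Set.Finite.biUnion s.finite_toSet
        (fun i (hi : i ∈ s) => hfin i (Finset.mem_cons_of_mem hi)))
      rintro p ⟨hpS, hpsupp⟩
      simp only [Function.mem_support, Finset.sum_mul] at hpsupp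
      obtain ⟨i, hi, hne⟩ := Finset.exists_ne_zero_of_sum_ne_zero hpsupp
      exact Set.mem_biUnion hi ⟨hpS, hne⟩
    calc gr.conv R (fun δ => x a δ + ∑ i ∈ s, x i δ) y γ
        = ∑ᶠ p ∈ {p : G × G | gr.src p.1 = gr.rng p.2 ∧ gr.mul p.1 p.2 = γ},
            (x a p.1 * y p.2 + (∑ i ∈ s, x i p.1) * y p.2) := by
          rw [conv_apply]
          apply finsum_mem_congr rfl
          intro p _
          rw [add_mul]
      _ = _ := by
          rw [finsum_mem_add_distrib' hfa hfs, conv_apply, conv_apply]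

/-- Indicators of compact open sets are Steinberg functions. -/
lemma insteinberg_indicator [T2Space G] {D : Set G} (hDo : IsOpen D) (hDc : IsCompact D)
    (r : R) : InSteinberg R (D.indicator fun _ => r) := by
  constructor
  · intro s
    classical
    by_cases hr : r ∈ s <;> by_cases h0 : (0 : R) ∈ s
    · have : (D.indicator fun _ => r) ⁻¹' s = Set.univ := by
        ext γ; by_cases h : γ ∈ D <;> simp [Set.indicator_apply, h, hr, h0]
      rw [this]; exact isOpen_univ
    · have : (D.indicator fun _ => r) ⁻¹' s = D := by
        ext γ; by_cases h : γ ∈ D <;> simp [Set.indicator_apply, h, hr, h0]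
      rw [this]; exact hDo
    · have : (D.indicator fun _ => r) ⁻¹' s = Dᶜ := by
        ext γ; by_cases h : γ ∈ D <;> simp [Set.indicator_apply, h, hr, h0]
      rw [this]; exact hDc.isClosed.isOpen_compl
    · have : (D.indicator fun _ => r) ⁻¹' s = ∅ := by
        ext γ; by_cases h : γ ∈ D <;> simp [Set.indicator_apply, h, hr, h0]
      rw [this]; exact isOpen_empty
  · have hsub : tsupport (D.indicator fun _ => r) ⊆ D := by
      apply closure_minimal _ hDc.isClosed
      intro γ hγ
      by_contra hne
      exact hγ (Set.indicator_of_notMem hne _)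
    exact hDc.of_isClosed_subset (isClosed_tsupport _) hsub

lemma insteinberg_zero : InSteinberg R (fun _ : G => (0 : R)) := by
  constructor
  · exact IsLocallyConstant.const 0
  · have : tsupport (fun _ : G => (0 : R)) = ∅ := by
      simp [tsupport, Function.support]
    rw [HasCompactSupport, this]
    exact isCompact_empty

lemma InSteinberg.add {x y : G → R} (hx : InSteinberg R x) (hy : InSteinberg R y) :
    InSteinberg R (fun γ => x γ + y γ) := by
  constructor
  · exact hx.1.comp₂ hy.1 (· + ·)
  · have hsub : tsupport (fun γ => x γ + y γ) ⊆ tsupport x ∪ tsupport y := by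
      apply closure_minimal _ ((isClosed_tsupport x).union (isClosed_tsupport y))
      intro γ hγ
      by_contra hne
      rw [Set.mem_union] at hne
      push_neg at hne
      have h1 : x γ = 0 := image_eq_zero_of_notMem_tsupport hne.1
      have h2 : y γ = 0 := image_eq_zero_of_notMem_tsupport hne.2
      simp [Function.mem_support, h1, h2] at hγ
    exact (hx.2.union hy.2).of_isClosed_subset (isClosed_tsupport _) hsub

lemma insteinberg_sum {ι : Type*} (s : Finset ι) (F : ι → G → R)
    (h : ∀ i ∈ s, InSteinberg R (F i)) : InSteinberg R (fun γ => ∑ i ∈ s, F i γ) := by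
  classical
  induction s using Finset.cons_induction with
  | empty => simpa using insteinberg_zero
  | cons a s has ih =>
    simp only [Finset.sum_cons]
    exact (h a (Finset.mem_cons_self a s)).add
      (ih fun i hi => h i (Finset.mem_cons_of_mem hi))

end Aux4

end DGroupoid
namespace DGroupoid

open Function Set

section Aux5

set_option linter.unusedSectionVars false

variable {G : Type*} [TopologicalSpace G] [T2Space G] {R : Type*} [CommRing R]
variable {gr : DGroupoid G}

lemma conv_piece_formula {D : Set G} (hD : gr.IsPiece D)
    {e : OpenPartialHomeomorph G gr.unitSpace} (he : ⇑e = gr.rngTo) (hDe : D ⊆ e.source)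
    (r : R) (y : G → R) (γ : G) :
    gr.conv R (D.indicator fun _ => r) y γ =
      (gr.rngTo ⁻¹' (gr.rngTo '' D)).indicator
        (fun δ => r * y (gr.mul (gr.inv (e.symm (gr.rngTo δ))) δ)) γ := by
  by_cases hγ : gr.rngTo γ ∈ gr.rngTo '' D
  · obtain ⟨α, hαD, hα⟩ := hγ
    have hrng : gr.rng α = gr.rng γ := congrArg Subtype.val hα
    have hsymm : e.symm (gr.rngTo γ) = α := by
      rw [← hα, ← he]
      exact e.left_inv (hDe hαD)
    set β := gr.mul (gr.inv α) γ with hβ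
    have hcomp : gr.src (gr.inv α) = gr.rng γ := by rw [gr.src_inv, hrng]
    have h1 : gr.src α = gr.rng β := by
      rw [hβ, gr.rng_mul _ _ hcomp, gr.rng_inv]
    have h2 : gr.mul α β = γ := gr.inv_mul_cancel_left' α γ hrng
    rw [conv_eq_single (α, β) h1 h2 ?uniq]
    · rw [Set.indicator_of_mem (show γ ∈ gr.rngTo ⁻¹' (gr.rngTo '' D) from
        Set.mem_preimage.mpr ⟨α, hαD, hα⟩)]
      show (D.indicator fun _ => r) α * y β = _
      rw [Set.indicator_of_mem hαD, hsymm]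
    case uniq =>
      rintro ⟨p1, p2⟩ hpS hpγ hne
      have hp1D : p1 ∈ D := by
        by_contra h
        rw [show (D.indicator fun _ => r) p1 = 0 from Set.indicator_of_notMem h _,
          zero_mul] at hne
        exact hne rfl
      have hrng1 : gr.rng p1 = gr.rng γ := by
        rw [← hpγ]; exact (gr.rng_mul _ _ hpS).symm
      have hp1α : p1 = α := by
        apply e.injOn (hDe hp1D) (hDe hαD)
        show e p1 = e α
        rw [he]
        exact Subtype.ext (hrng1.trans hrng.symm)
      have hp2 : p2 = β := by
        rw [hβ, ← hp1α, ← hpγ]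
        exact (gr.mul_inv_cancel_left' p1 p2 hpS).symm
      exact Prod.ext hp1α hp2
  · rw [Set.indicator_of_notMem (show γ ∉ gr.rngTo ⁻¹' (gr.rngTo '' D) from hγ)]
    apply conv_eq_zero'
    rintro ⟨p1, p2⟩ hpS hpγ
    by_cases hp1D : p1 ∈ D
    · exfalso
      apply hγ
      refine ⟨p1, hp1D, ?_⟩
      have hrng1 : gr.rng p1 = gr.rng γ := by
        rw [← hpγ]; exact (gr.rng_mul _ _ hpS).symm
      exact Subtype.ext hrng1
    · rw [show (D.indicator fun _ => r) p1 = 0 from Set.indicator_of_notMem hp1D _,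
        zero_mul]

lemma conv_piece_insteinberg (ht : gr.IsTopological) {D : Set G} (hD : gr.IsPiece D)
    (r : R) {y : G → R} (hy : InSteinberg R y) :
    InSteinberg R (gr.conv R (D.indicator fun _ => r) y) := by
  obtain ⟨e, he, hDe⟩ := hD.chart
  have hform : gr.conv R (D.indicator fun _ => r) y =
      (gr.rngTo ⁻¹' (gr.rngTo '' D)).indicator
        (fun δ => r * y (gr.mul (gr.inv (e.symm (gr.rngTo δ))) δ)) :=
    funext (conv_piece_formula hD he hDe r y)
  rw [hform]
  set O := gr.rngTo ⁻¹' (gr.rngTo '' D) with hO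
  set φ : G → G := fun δ => gr.mul (gr.inv (e.symm (gr.rngTo δ))) δ with hφ
  have hrngcont : Continuous gr.rngTo := gr.continuous_rngTo ht
  have hOopen : IsOpen O := by
    rw [hO, show gr.rngTo '' D = ⇑e '' D from by rw [he]]
    exact (e.isOpen_image_of_subset_source hD.isOpen hDe).preimage hrngcont
  have hOclosed : IsClosed O :=
    ((hD.compact.image hrngcont).isClosed).preimage hrngcont
  have htarget : ∀ δ ∈ O, gr.rngTo δ ∈ e.target := by
    intro δ hδ
    obtain ⟨α, hαD, hα⟩ := hδ
    rw [← hα, ← he]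
    exact e.map_source (hDe hαD)
  have hsymmD : ∀ δ ∈ O, e.symm (gr.rngTo δ) ∈ D := by
    intro δ hδ
    obtain ⟨α, hαD, hα⟩ := hδ
    rw [← hα, ← he, e.left_inv (hDe hαD)]
    exact hαD
  have hsymmrng : ∀ δ ∈ O, gr.rng (e.symm (gr.rngTo δ)) = gr.rng δ := by
    intro δ hδ
    have h1 : gr.rngTo (e.symm (gr.rngTo δ)) = gr.rngTo δ := by
      have h2 := e.right_inv (htarget δ hδ)
      rwa [he] at h2
    exact congrArg Subtype.val h1
  have hφcont : ContinuousOn φ O := by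
    have hψ : ContinuousOn (fun δ => (gr.inv (e.symm (gr.rngTo δ)), δ)) O := by
      apply ContinuousOn.prodMk
      · apply ht.continuous_inv.comp_continuousOn
        apply e.continuousOn_symm.comp hrngcont.continuousOn
        intro δ hδ
        exact htarget δ hδ
      · exact continuousOn_id
    have := ht.continuous_mul.comp hψ (fun δ hδ => by
      show gr.src (gr.inv (e.symm (gr.rngTo δ))) = gr.rng δ
      rw [gr.src_inv, hsymmrng δ hδ])
    exact this
  constructor
  · rw [IsLocallyConstant.iff_exists_open]
    intro γ
    by_cases hγ : γ ∈ O
    · have hfib : IsOpen (y ⁻¹' {y (φ γ)}) := hy.1 _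
      refine ⟨O ∩ φ ⁻¹' (y ⁻¹' {y (φ γ)}), hφcont.isOpen_inter_preimage hOopen hfib,
        ⟨hγ, by simp⟩, ?_⟩
      rintro δ ⟨hδO, hδfib⟩
      rw [Set.indicator_of_mem hδO, Set.indicator_of_mem hγ]
      simp only [Set.mem_preimage, Set.mem_singleton_iff] at hδfib
      rw [hδfib]
    · exact ⟨Oᶜ, hOclosed.isOpen_compl, hγ, fun δ hδ => by
        rw [Set.indicator_of_notMem hδ, Set.indicator_of_notMem hγ]⟩
  · set K := (fun p : G × G => gr.mul p.1 p.2) '' ((D ×ˢ tsupport y) ∩ gr.composable) with hK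
    have hKcomp : IsCompact K := by
      apply IsCompact.image_of_continuousOn
      · exact (hD.compact.prod hy.2).inter_right (gr.isClosed_composable ht)
      · exact ht.continuous_mul.mono Set.inter_subset_right
    have hsub : Function.support (O.indicator fun δ => r * y (φ δ)) ⊆ K := by
      intro δ hδ
      have hδO : δ ∈ O := by
        by_contra h; exact hδ (Set.indicator_of_notMem h _)
      have hyne : y (φ δ) ≠ 0 := by
        intro h
        apply hδ
        rw [Set.indicator_of_mem hδO]
        show r * y (φ δ) = 0
        rw [h, mul_zero]
      refine ⟨(e.symm (gr.rngTo δ), φ δ),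
        ⟨⟨hsymmD δ hδO, subset_tsupport y (Function.mem_support.mpr hyne)⟩, ?_⟩, ?_⟩
      · show gr.src (e.symm (gr.rngTo δ)) = gr.rng (φ δ)
        rw [hφ]
        rw [gr.rng_mul _ _ (by rw [gr.src_inv, hsymmrng δ hδO]), gr.rng_inv]
      · show gr.mul (e.symm (gr.rngTo δ)) (φ δ) = δ
        exact gr.inv_mul_cancel_left' _ δ (hsymmrng δ hδO)
    exact hKcomp.of_isClosed_subset (isClosed_tsupport _)
      (closure_minimal hsub hKcomp.isClosed)

end Aux5

end DGroupoid
namespace DGroupoid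

open Function Set

section Aux6

set_option linter.unusedSectionVars false

variable {G : Type*} [TopologicalSpace G] [T2Space G] {R : Type*} [CommRing R]
variable {gr : DGroupoid G}

lemma piece_support_subsingleton {D : Set G} (hD : gr.IsPiece D) (r : R) (y : G → R)
    (γ : G) :
    ({p : G × G | gr.src p.1 = gr.rng p.2 ∧ gr.mul p.1 p.2 = γ} ∩
      Function.support (fun p : G × G => (D.indicator fun _ => r) p.1 * y p.2)).Subsingleton := by
  rintro ⟨p1, p2⟩ ⟨hpS, hpsupp⟩ ⟨q1, q2⟩ ⟨hqS, hqsupp⟩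
  have hp1D : p1 ∈ D := by
    by_contra h
    rw [Function.mem_support, Set.indicator_of_notMem h, zero_mul] at hpsupp
    exact hpsupp rfl
  have hq1D : q1 ∈ D := by
    by_contra h
    rw [Function.mem_support, Set.indicator_of_notMem h, zero_mul] at hqsupp
    exact hqsupp rfl
  have hrp : gr.rng p1 = gr.rng γ := by
    rw [← hpS.2]; exact (gr.rng_mul _ _ hpS.1).symm
  have hrq : gr.rng q1 = gr.rng γ := by
    rw [← hqS.2]; exact (gr.rng_mul _ _ hqS.1).symm
  have h1 : p1 = q1 := hD.rngInj hp1D hq1D (hrp.trans hrq.symm)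
  have hp2 : p2 = gr.mul (gr.inv p1) γ := by
    rw [← hpS.2]; exact (gr.mul_inv_cancel_left' _ _ hpS.1).symm
  have hq2 : q2 = gr.mul (gr.inv q1) γ := by
    rw [← hqS.2]; exact (gr.mul_inv_cancel_left' _ _ hqS.1).symm
  have h2 : p2 = q2 := by rw [hp2, hq2, h1]
  exact Prod.ext h1 h2

lemma conv_insteinberg (ht : gr.IsTopological) (ha : gr.IsAmple) {x y : G → R}
    (hx : InSteinberg R x) (hy : InSteinberg R y) : InSteinberg R (gr.conv R x y) := by
  obtain ⟨n, D, r, hpieces, _, _, hsum⟩ := decompose ha hx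
  have hxeq : x = fun δ => ∑ i : Fin n, (D i).indicator (fun _ => r i) δ := funext hsum
  have hconv : gr.conv R x y = fun γ =>
      ∑ i : Fin n, gr.conv R ((D i).indicator fun _ => r i) y γ := by
    funext γ
    rw [hxeq]
    exact conv_sum_left Finset.univ _ y γ
      (fun i _ => (piece_support_subsingleton (hpieces i) (r i) y γ).finite)
  rw [hconv]
  exact insteinberg_sum _ _ fun i _ => conv_piece_insteinberg ht (hpieces i) (r i) hy

lemma unitlike_src (d : G) : gr.rng (gr.src d) = gr.src d := gr.rng_src d

lemma conv_inv_piece {D : Set G} (hD : gr.IsPiece D) (r : R) :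
    gr.conv R ((gr.inv '' D).indicator fun _ => (1 : R)) (D.indicator fun _ => r) =
      (gr.src '' D).indicator fun _ => r := by
  funext γ
  by_cases hγ : γ ∈ gr.src '' D
  · obtain ⟨d, hd, rfl⟩ := hγ
    have h1 : gr.src (gr.inv d) = gr.rng d := gr.src_inv d
    have h2 : gr.mul (gr.inv d) d = gr.src d := gr.inv_mul d
    rw [conv_eq_single (gr.inv d, d) h1 h2 ?uniq]
    · show ((gr.inv '' D).indicator fun _ => (1:R)) (gr.inv d) * (D.indicator fun _ => r) d = _
      rw [Set.indicator_of_mem (Set.mem_image_of_mem _ hd),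
        Set.indicator_of_mem hd, Set.indicator_of_mem (Set.mem_image_of_mem _ hd), one_mul]
    case uniq =>
      rintro ⟨p1, p2⟩ hpS hpγ hne
      have hp1 : p1 ∈ gr.inv '' D := by
        by_contra h
        rw [show ((gr.inv '' D).indicator fun _ => (1:R)) p1 = 0 from
          Set.indicator_of_notMem h _, zero_mul] at hne
        exact hne rfl
      have hp2 : p2 ∈ D := by
        by_contra h
        rw [show (D.indicator fun _ => r) p2 = 0 from Set.indicator_of_notMem h _,
          mul_zero] at hne
        exact hne rfl
      obtain ⟨d', hd', rfl⟩ := hp1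
      have hrr : gr.rng d' = gr.rng p2 := by rw [← gr.src_inv d']; exact hpS
      have hd'p2 : d' = p2 := hD.rngInj hd' hp2 hrr
      subst hd'p2
      have hss : gr.src d' = gr.src d := by rw [← gr.inv_mul d', hpγ]
      have : d' = d := hD.srcInj hd' hd hss
      subst this
      rfl
  · rw [Set.indicator_of_notMem hγ]
    apply conv_eq_zero'
    rintro ⟨p1, p2⟩ hpS hpγ
    by_cases hp1 : p1 ∈ gr.inv '' D
    · by_cases hp2 : p2 ∈ D
      · exfalso
        obtain ⟨d', hd', rfl⟩ := hp1
        have hrr : gr.rng d' = gr.rng p2 := by rw [← gr.src_inv d']; exact hpS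
        have hd'p2 : d' = p2 := hD.rngInj hd' hp2 hrr
        subst hd'p2
        apply hγ
        exact ⟨d', hd', by rw [← hpγ, gr.inv_mul]⟩
      · rw [show (D.indicator fun _ => r) p2 = 0 from Set.indicator_of_notMem hp2 _,
          mul_zero]
    · rw [show ((gr.inv '' D).indicator fun _ => (1:R)) p1 = 0 from
        Set.indicator_of_notMem hp1 _, zero_mul]

lemma conv_piece_src {D : Set G} (hD : gr.IsPiece D) (r : R) :
    gr.conv R (D.indicator fun _ => (1 : R)) ((gr.src '' D).indicator fun _ => r) =
      D.indicator fun _ => r := by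
  funext γ
  by_cases hγ : γ ∈ D
  · have h1 : gr.src γ = gr.rng (gr.src γ) := (gr.rng_src γ).symm
    have h2 : gr.mul γ (gr.src γ) = γ := gr.mul_src γ
    rw [conv_eq_single (γ, gr.src γ) h1 h2 ?uniq]
    · show (D.indicator fun _ => (1:R)) γ * ((gr.src '' D).indicator fun _ => r) (gr.src γ) = _
      rw [Set.indicator_of_mem hγ, Set.indicator_of_mem (Set.mem_image_of_mem _ hγ),
        Set.indicator_of_mem hγ, one_mul]
    case uniq =>
      rintro ⟨p1, p2⟩ hpS hpγ hne
      have hp1 : p1 ∈ D := by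
        by_contra h
        rw [show (D.indicator fun _ => (1:R)) p1 = 0 from Set.indicator_of_notMem h _,
          zero_mul] at hne
        exact hne rfl
      have hp2 : p2 ∈ gr.src '' D := by
        by_contra h
        rw [show ((gr.src '' D).indicator fun _ => r) p2 = 0 from
          Set.indicator_of_notMem h _, mul_zero] at hne
        exact hne rfl
      obtain ⟨d', _, rfl⟩ := hp2
      have hunit : gr.rng (gr.src d') = gr.src d' := gr.rng_src d'
      have hsrc : gr.src p1 = gr.src d' := by rw [hpS, hunit]
      have hp1γ : p1 = γ := by rw [← hpγ, ← hsrc, gr.mul_src]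
      subst hp1γ
      have : gr.src d' = gr.src p1 := hsrc.symm
      rw [Prod.mk.injEq]
      exact ⟨rfl, by rw [this]⟩
  · rw [Set.indicator_of_notMem hγ]
    apply conv_eq_zero'
    rintro ⟨p1, p2⟩ hpS hpγ
    by_cases hp1 : p1 ∈ D
    · by_cases hp2 : p2 ∈ gr.src '' D
      · exfalso
        obtain ⟨d', _, rfl⟩ := hp2
        have hsrc : gr.src p1 = gr.src d' := by rw [hpS, gr.rng_src]
        have : p1 = γ := by rw [← hpγ, ← hsrc, gr.mul_src]
        exact hγ (this ▸ hp1)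
      · rw [show ((gr.src '' D).indicator fun _ => r) p2 = 0 from
          Set.indicator_of_notMem hp2 _, mul_zero]
    · rw [show (D.indicator fun _ => (1:R)) p1 = 0 from Set.indicator_of_notMem hp1 _,
        zero_mul]

lemma image_inv_eq_preimage : ∀ (D : Set G), gr.inv '' D = gr.inv ⁻¹' D := by
  intro D
  ext δ
  constructor
  · rintro ⟨d, hd, rfl⟩
    show gr.inv (gr.inv d) ∈ D
    rw [gr.inv_inv']
    exact hd
  · intro h
    exact ⟨gr.inv δ, h, gr.inv_inv' δ⟩

end Aux6

end DGroupoid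
/-- A locally constant `Γ`-valued cocycle on an ample Hausdorff groupoid induces a
`Γ`-grading of the Steinberg algebra by the submodules `A_g = C_c(G_g, R)`
(functions supported on `c⁻¹(g)`), and this grading is symmetric:
`A_g A_{g⁻¹} A_g = A_g` for all `g`. -/
theorem stmt18 {G R Γ : Type*} [TopologicalSpace G] [T2Space G] [CommRing R] [Group Γ]
    (gr : DGroupoid G) (ha : gr.IsAmple)
    (c : G → Γ) (hc : IsLocallyConstant c)
    (hcoc : ∀ a b, gr.src a = gr.rng b → c (gr.mul a b) = c a * c b)
    (A : Γ → Set (G → R))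
    (hA : ∀ g, A g = {f | DGroupoid.InSteinberg R f ∧ ∀ γ, c γ ≠ g → f γ = 0}) :
    (∀ f : G → R, DGroupoid.InSteinberg R f → ∃ F : Finset Γ,
      (∀ g, (c ⁻¹' {g}).indicator f ∈ A g) ∧
      ∀ γ, f γ = ∑ g ∈ F, (c ⁻¹' {g}).indicator f γ) ∧
    (∀ g h : Γ, ∀ x ∈ A g, ∀ y ∈ A h, gr.conv R x y ∈ A (g * h)) ∧
    (∀ g : Γ, Submodule.span R (A g) =
      Submodule.span R
        {w | ∃ x ∈ A g, ∃ y ∈ A g⁻¹, ∃ z ∈ A g, w = gr.conv R x (gr.conv R y z)}) := by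
  classical
  have ht := ha.toIsEtale.toIsTopological
  -- Part 2 first (it is reused in part 3)
  have hmul : ∀ g h : Γ, ∀ x ∈ A g, ∀ y ∈ A h, gr.conv R x y ∈ A (g * h) := by
    intro g h x hx y hy
    rw [hA] at hx hy ⊢
    refine ⟨DGroupoid.conv_insteinberg ht ha hx.1 hy.1, ?_⟩
    intro γ hγ
    apply DGroupoid.conv_eq_zero'
    intro p hpS hpγ
    by_cases h1 : x p.1 = 0
    · rw [h1, zero_mul]
    by_cases h2 : y p.2 = 0
    · rw [h2, mul_zero]
    exfalso
    have hc1 : c p.1 = g := by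
      by_contra hne; exact h1 (hx.2 _ hne)
    have hc2 : c p.2 = h := by
      by_contra hne; exact h2 (hy.2 _ hne)
    apply hγ
    rw [← hpγ, hcoc _ _ hpS, hc1, hc2]
  refine ⟨?_, hmul, ?_⟩
  · -- Part 1 : the grading decomposition
    intro f hf
    have hsc : IsCompact (Function.support f) := DGroupoid.support_compact hf
    obtain ⟨F, hF⟩ := hsc.elim_finite_subcover (fun g : Γ => c ⁻¹' {g})
      (fun g => hc {g}) (fun γ _ => Set.mem_iUnion.mpr ⟨c γ, rfl⟩)
    refine ⟨F, ?_, ?_⟩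
    · intro g
      rw [hA]
      refine ⟨⟨?_, ?_⟩, ?_⟩
      · -- locally constant
        rw [IsLocallyConstant.iff_exists_open]
        intro γ
        by_cases hγ : γ ∈ c ⁻¹' {g}
        · refine ⟨c ⁻¹' {g} ∩ f ⁻¹' {f γ}, (hc {g}).inter (hf.1 {f γ}), ⟨hγ, rfl⟩, ?_⟩
          rintro δ ⟨hδc, hδf⟩
          rw [Set.indicator_of_mem hδc, Set.indicator_of_mem hγ]
          exact hδf
        · refine ⟨(c ⁻¹' {g})ᶜ, (hc {g}ᶜ), hγ, ?_⟩
          intro δ hδ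
          rw [Set.indicator_of_notMem hδ, Set.indicator_of_notMem hγ]
      · -- compact support
        have hsub : Function.support ((c ⁻¹' {g}).indicator f) ⊆ tsupport f := by
          intro δ hδ
          apply subset_tsupport
          rw [Function.mem_support] at hδ ⊢
          intro h0
          apply hδ
          by_cases hδc : δ ∈ c ⁻¹' {g}
          · rw [Set.indicator_of_mem hδc]; exact h0
          · exact Set.indicator_of_notMem hδc _
        exact hf.2.of_isClosed_subset (isClosed_tsupport _)
          (closure_minimal hsub (isClosed_tsupport f))
      · -- vanishing off the fiber
        intro γ hγ
        exact Set.indicator_of_notMem (show γ ∉ c ⁻¹' {g} from fun h => hγ h) f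
    · intro γ
      by_cases hγF : c γ ∈ F
      · rw [Finset.sum_eq_single (c γ)]
        · exact (Set.indicator_of_mem (show γ ∈ c ⁻¹' {c γ} from rfl) f).symm
        · intro g _ hg
          exact Set.indicator_of_notMem
            (show γ ∉ c ⁻¹' {g} from fun h => hg (Set.mem_singleton_iff.mp h).symm) f
        · intro h; exact absurd hγF h
      · have h0 : f γ = 0 := by
          by_contra h
          have := hF (Function.mem_support.mpr h)
          rw [Set.mem_iUnion₂] at this
          obtain ⟨g, hgF, hmem⟩ := this
          exact hγF ((Set.mem_singleton_iff.mp hmem) ▸ hgF)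
        rw [h0]
        symm
        apply Finset.sum_eq_zero
        intro g hgF
        refine Set.indicator_of_notMem (show γ ∉ c ⁻¹' {g} from ?_) f
        intro hmem
        exact hγF ((Set.mem_singleton_iff.mp hmem) ▸ hgF)
  · -- Part 3 : symmetry of the grading
    intro g
    apply le_antisymm
    · -- span (A g) ≤ span (triple products)
      rw [Submodule.span_le]
      intro f hf
      have hf' := hf
      rw [hA] at hf'
      obtain ⟨n, D, r, hpieces, hsupp, hval, hsum⟩ := DGroupoid.decompose ha hf'.1
      have hfib : ∀ i, ∀ δ ∈ D i, c δ = g := by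
        intro i δ hδ
        by_contra hne
        exact (hsupp i hδ) (hf'.2 δ hne)
      have hfeq : f = ∑ i : Fin n, ((D i).indicator fun _ => r i) := by
        funext γ
        rw [hsum γ, Finset.sum_apply]
      rw [hfeq]
      apply Submodule.sum_mem
      intro i _
      apply Submodule.subset_span
      refine ⟨(D i).indicator fun _ => (1 : R), ?_,
        (gr.inv '' D i).indicator fun _ => (1 : R), ?_,
        (D i).indicator fun _ => r i, ?_, ?_⟩
      · rw [hA]
        refine ⟨DGroupoid.insteinberg_indicator (hpieces i).isOpen (hpieces i).compact 1, ?_⟩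
        intro γ hγ
        exact Set.indicator_of_notMem (fun h => hγ (hfib i γ h)) _
      · rw [hA]
        constructor
        · apply DGroupoid.insteinberg_indicator
          · rw [DGroupoid.image_inv_eq_preimage]
            exact (hpieces i).isOpen.preimage ht.continuous_inv
          · exact (hpieces i).compact.image ht.continuous_inv
        · intro γ hγ
          apply Set.indicator_of_notMem
          rintro ⟨d, hd, rfl⟩
          exact hγ (by rw [gr.c_inv hcoc, hfib i d hd])
      · rw [hA]
        refine ⟨DGroupoid.insteinberg_indicator (hpieces i).isOpen (hpieces i).compact (r i), ?_⟩
        intro γ hγ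
        exact Set.indicator_of_notMem (fun h => hγ (hfib i γ h)) _
      · rw [DGroupoid.conv_inv_piece (hpieces i) (r i),
          DGroupoid.conv_piece_src (hpieces i) (r i)]
    · -- span (triple products) ≤ span (A g)
      rw [Submodule.span_le]
      rintro w ⟨x, hx, y, hy, z, hz, rfl⟩
      apply Submodule.subset_span
      have h1 := hmul g⁻¹ g y hy z hz
      have h2 := hmul g (g⁻¹ * g) x hx _ h1
      rwa [mul_inv_cancel_left] at h2
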